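/- For every integer m ≥ 30, the polynomial g_m(t) = m!·t·∏_{i=m−1}^{2m−2}(t+i) − (2m−1)!·(t−1) ∈ ℤ[t] has non-negative coefficients. In particular, the coefficient of t in g_m equals (m² − 3m + 1)·(2m−2)! ≥ 0 and the constant coefficient equals (2m−1)!. -/

import Mathlib

open Polynomial Finset

lemma coeff_prod_nonneg' {s : Finset ℕ} (f : ℕ → Polynomial ℤ)
    (hf : ∀ i ∈ s, ∀ k, 0 ≤ (f i).coeff k) :
    ∀ k, 0 ≤ (∏ i ∈ s, f i).coeff k := by
  classical
  refine Finset.prod_induction f (fun p => ∀ k, 0 ≤ p.coeff k) ?_ ?_ hf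
  · intro p q hp hq k
    rw [Polynomial.coeff_mul]
    exact Finset.sum_nonneg fun x _ => mul_nonneg (hp _) (hq _)
  · intro k
    rw [Polynomial.coeff_one]
    split <;> norm_num

lemma fact_prod_key (a : ℕ) :
    (a + 2).factorial * ∏ i ∈ Finset.Icc (a + 1) (2 * a + 2), i
      = (a + 2) * (a + 1) * (2 * a + 2).factorial := by
  have h1 : (∏ i ∈ Finset.Ioc 0 a, i) * ∏ i ∈ Finset.Ioc a (2 * a + 2), i
      = ∏ i ∈ Finset.Ioc 0 (2 * a + 2), i :=
    Finset.prod_Ioc_consecutive _ (Nat.zero_le a) (by omega)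
  have eIoc : ∀ n : ℕ, ∏ i ∈ Finset.Ioc 0 n, i = n.factorial := by
    intro n
    rw [show Finset.Ioc 0 n = Finset.Ico 1 (n + 1) by
      rw [← Finset.Icc_add_one_left_eq_Ioc, Finset.Ico_add_one_right_eq_Icc, zero_add]]
    exact Finset.prod_Ico_id_eq_factorial n
  have e3 : Finset.Ioc a (2 * a + 2) = Finset.Icc (a + 1) (2 * a + 2) :=
    (Finset.Icc_add_one_left_eq_Ioc a (2 * a + 2)).symm
  rw [eIoc, eIoc, e3] at h1
  have hf : (a + 2).factorial = (a + 2) * ((a + 1) * a.factorial) := by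
    rw [Nat.factorial_succ, Nat.factorial_succ]
  rw [hf, mul_assoc, mul_assoc, h1]; ring

/-- For `m ≥ 30`, the polynomial `g_m(t) = m!·t·∏_{i=m−1}^{2m−2}(t+i) − (2m−1)!·(t−1)` has
non-negative coefficients; its coefficient of `t` is `(m²−3m+1)(2m−2)! ≥ 0` and its constant
coefficient is `(2m−1)!`. -/
theorem stmt_14 (m : ℕ) (hm : 30 ≤ m) (g : Polynomial ℤ)
    (hg : g = C ((Nat.factorial m : ℤ)) * X * ∏ i ∈ Finset.Icc (m - 1) (2 * m - 2), (X + C (i : ℤ))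
        - C ((Nat.factorial (2 * m - 1) : ℤ)) * (X - 1)) :
    (∀ k : ℕ, 0 ≤ g.coeff k) ∧
    g.coeff 1 = ((m : ℤ) ^ 2 - 3 * m + 1) * (Nat.factorial (2 * m - 2) : ℤ) ∧
    0 ≤ ((m : ℤ) ^ 2 - 3 * m + 1) * (Nat.factorial (2 * m - 2) : ℤ) ∧
    g.coeff 0 = (Nat.factorial (2 * m - 1) : ℤ) := by
  subst hg
  set P : Polynomial ℤ := ∏ i ∈ Finset.Icc (m - 1) (2 * m - 2), (X + C (i : ℤ)) with hP
  have hPnn : ∀ k, 0 ≤ P.coeff k := by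
    refine coeff_prod_nonneg' _ ?_
    intro i _ k
    match k with
    | 0 => simp
    | 1 => simp
    | (n + 2) => simp [coeff_X, coeff_C]
  have hP0 : P.coeff 0 = ((∏ i ∈ Finset.Icc (m - 1) (2 * m - 2), i : ℕ) : ℤ) := by
    rw [hP, coeff_zero_eq_eval_zero]
    simp [eval_prod]
  -- key factorial identity
  obtain ⟨a, rfl⟩ : ∃ a, m = a + 2 := ⟨m - 2, by omega⟩
  have hsub1 : a + 2 - 1 = a + 1 := by omega
  have hsub2 : 2 * (a + 2) - 2 = 2 * a + 2 := by omega
  have hsub3 : 2 * (a + 2) - 1 = 2 * a + 2 + 1 := by omega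
  rw [hsub1, hsub2] at hP
  have hkey : ((a + 2).factorial : ℤ) * P.coeff 0
      = ((a : ℤ) + 2) * ((a : ℤ) + 1) * ((2 * a + 2).factorial : ℤ) := by
    rw [hP0, hsub1, hsub2, ← Nat.cast_mul, fact_prod_key]
    push_cast
    ring
  have hfact3 : ((2 * (a + 2) - 1).factorial : ℤ)
      = (2 * (a : ℤ) + 3) * ((2 * a + 2).factorial : ℤ) := by
    rw [hsub3, Nat.factorial_succ]
    push_cast
    ring
  -- coefficient formula
  have hcoeff : ∀ k, (C ((a + 2).factorial : ℤ) * X * P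
        - C ((2 * (a + 2) - 1).factorial : ℤ) * (X - 1)).coeff k
      = ((a + 2).factorial : ℤ) * (X * P).coeff k
        - ((2 * (a + 2) - 1).factorial : ℤ) * ((X : Polynomial ℤ) - 1).coeff k := by
    intro k
    rw [coeff_sub, mul_assoc, coeff_C_mul, coeff_C_mul]
  have h0 : (C ((a + 2).factorial : ℤ) * X * P
        - C ((2 * (a + 2) - 1).factorial : ℤ) * (X - 1)).coeff 0
      = ((2 * (a + 2) - 1).factorial : ℤ) := by
    rw [hcoeff 0, mul_coeff_zero]
    simp
  have h1 : (C ((a + 2).factorial : ℤ) * X * P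
        - C ((2 * (a + 2) - 1).factorial : ℤ) * (X - 1)).coeff 1
      = (((a : ℤ) + 2) ^ 2 - 3 * ((a : ℤ) + 2) + 1) * ((2 * (a + 2) - 2).factorial : ℤ) := by
    rw [hcoeff 1, coeff_X_mul, hsub2]
    simp only [coeff_sub, coeff_X_one, coeff_one, if_neg (by norm_num : ¬(1 : ℕ) = 0)]
    rw [hkey, hfact3]
    ring_nf
  have hnn : 0 ≤ (((a : ℤ) + 2) ^ 2 - 3 * ((a : ℤ) + 2) + 1) * ((2 * (a + 2) - 2).factorial : ℤ) := by
    have ha : (30 : ℤ) ≤ (a : ℤ) + 2 := by exact_mod_cast hm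
    have : (0 : ℤ) ≤ ((a : ℤ) + 2) ^ 2 - 3 * ((a : ℤ) + 2) + 1 := by nlinarith
    exact mul_nonneg this (by positivity)
  refine ⟨?_, by push_cast [h1]; ring, by push_cast at hnn ⊢; linarith, h0⟩
  intro k
  match k with
  | 0 => rw [h0]; positivity
  | 1 => rw [h1]; exact hnn
  | (n + 2) =>
    rw [hcoeff (n + 2), coeff_X_mul]
    simp only [coeff_sub, coeff_X, coeff_one, if_neg (by omega : ¬(1 : ℕ) = n + 2),
      if_neg (by omega : ¬(n + 2) = 0), mul_zero, sub_zero]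
    exact mul_nonneg (by positivity) (hPnn (n + 1))
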